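/- (Lemma 6.2, bounded case.) If S is bounded, i.e. there exists B > 0 such that f vanishes almost everywhere on (B,∞), then the M/G/1 SRPT mean response time dominates the logarithm of 1/(1−ρ) in heavy traffic: lim_{λ → (1/m)⁻} ln(1/(1−λm)) / T̄(λ) = 0. -/

import Mathlib

open MeasureTheory Filter

/-- Relevant load `ρ_{≤x} = λ ∫₀^x t f(t) dt`. -/
noncomputable def rhoLe (f : ℝ → ℝ) (lam x : ℝ) : ℝ :=
  lam * ∫ t in (0:ℝ)..x, t * f t

/-- Tail of the service requirement distribution, `F̄(x) = ∫_x^∞ f(t) dt`. -/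
noncomputable def tailS (f : ℝ → ℝ) (x : ℝ) : ℝ :=
  ∫ t in Set.Ioi x, f t

/-- Schrage's exact formula `T̄_λ(x)` for the mean response time of a size-`x`
job in an M/G/1 queue under SRPT. -/
noncomputable def Tsrpt1 (f : ℝ → ℝ) (lam x : ℝ) : ℝ :=
  (lam * (∫ t in (0:ℝ)..x, t ^ 2 * f t) + lam * x ^ 2 * tailS f x)
      / (2 * (1 - rhoLe f lam x) ^ 2)
    + ∫ t in (0:ℝ)..x, 1 / (1 - rhoLe f lam t)

/-- Overall M/G/1 SRPT mean response time `T̄(λ) = ∫₀^∞ T̄_λ(x) f(x) dx`. -/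
noncomputable def TsrptMean (f : ℝ → ℝ) (lam : ℝ) : ℝ :=
  ∫ x in Set.Ioi (0:ℝ), Tsrpt1 f lam x * f x

set_option maxHeartbeats 2000000 in
/-- **Lemma 6.2, bounded case.** If `S` is bounded, then
`lim_{λ → (1/m)⁻} ln(1/(1−λm)) / T̄(λ) = 0`. -/
theorem log_over_Tsrpt1_tendsto_zero_bounded
    (f : ℝ → ℝ) (m : ℝ)
    (hf_meas : Measurable f)
    (hf_nonneg : ∀ x, 0 ≤ f x)
    (hf_zero : ∀ x ≤ 0, f x = 0)
    (hf_prob : ∫ t in Set.Ioi (0:ℝ), f t = 1)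
    (hm_int : Integrable (fun t => t * f t) (volume.restrict (Set.Ioi 0)))
    (hm_def : m = ∫ t in Set.Ioi (0:ℝ), t * f t)
    (hm_pos : 0 < m)
    (hbounded : ∃ B > (0:ℝ), ∀ᵐ x : ℝ, B < x → f x = 0) :
    Tendsto (fun lam => Real.log (1 / (1 - lam * m)) / TsrptMean f lam)
      (nhdsWithin (1/m) (Set.Iio (1/m))) (nhds 0) := by
  classical
  obtain ⟨B, hBpos, hBf⟩ := hbounded
  set g : ℝ → ℝ := fun t => t * f t with hg_def
  have hg_nonneg : ∀ t, 0 ≤ g t := by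
    intro t
    rcases le_or_gt t 0 with ht | ht
    · simp [hg_def, hf_zero t ht]
    · exact mul_nonneg ht.le (hf_nonneg t)
  have hg_int : Integrable g := by
    have h1 : IntegrableOn g (Set.Iic 0) := by
      refine IntegrableOn.congr_fun (integrableOn_zero (ε' := ℝ)) ?_ measurableSet_Iic
      intro x hx
      simp [hg_def, hf_zero x hx]
    have h3 := h1.union (hm_int : IntegrableOn g (Set.Ioi 0) volume)
    rw [Set.Iic_union_Ioi] at h3
    exact integrableOn_univ.mp h3
  have hf_int : IntegrableOn f (Set.Ioi 0) := by
    by_contra h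
    rw [integral_undef h] at hf_prob
    norm_num at hf_prob
  have hq_meas : Measurable fun t => t ^ 2 * f t := (measurable_id.pow_const 2).mul hf_meas
  have hq_nonneg : ∀ t, 0 ≤ t ^ 2 * f t := fun t => mul_nonneg (sq_nonneg t) (hf_nonneg t)
  have hq_int : Integrable (fun t => t ^ 2 * f t) := by
    refine Integrable.mono' (hg_int.const_mul B) hq_meas.aestronglyMeasurable ?_
    filter_upwards [hBf] with t ht
    rcases le_or_gt t 0 with h0 | h0
    · simp only [hf_zero t h0, mul_zero]
      simpa using mul_nonneg hBpos.le (hg_nonneg t)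
    rcases le_or_gt t B with hB | hB
    · rw [Real.norm_of_nonneg (hq_nonneg t)]
      calc t ^ 2 * f t = t * (t * f t) := by ring
        _ ≤ B * (t * f t) := mul_le_mul_of_nonneg_right hB (mul_nonneg h0.le (hf_nonneg t))
        _ = B * g t := by rw [hg_def]
    · simp only [ht hB, mul_zero]
      simpa using mul_nonneg hBpos.le (hg_nonneg t)
  -- the primitive H
  set H : ℝ → ℝ := fun x => ∫ t in (0:ℝ)..x, g t with hH_def
  have hH_cont : Continuous H := by rw [hH_def]; exact hg_int.continuous_primitive 0
  have hH0 : H 0 = 0 := by simp [hH_def]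
  have hH_mono : Monotone H := by
    intro x y hxy
    have hadd := intervalIntegral.integral_add_adjacent_intervals
      (hg_int.intervalIntegrable (a := 0) (b := x)) (hg_int.intervalIntegrable (a := x) (b := y))
    have hnn : 0 ≤ ∫ t in x..y, g t :=
      intervalIntegral.integral_nonneg hxy fun t _ => hg_nonneg t
    simp only [hH_def]
    linarith [hadd]
  have hH_split : ∀ x, 0 ≤ x → H x + ∫ t in Set.Ioi x, g t = m := by
    intro x hx
    have hdisj : Disjoint (Set.Ioc 0 x) (Set.Ioi x) := by
      rw [Set.disjoint_left]
      rintro a ha hb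
      exact absurd (Set.mem_Ioi.mp hb) (not_lt.mpr ha.2)
    have hu := setIntegral_union hdisj measurableSet_Ioi
      (hg_int.integrableOn) (hg_int.integrableOn) (μ := volume)
    rw [Set.Ioc_union_Ioi_eq_Ioi hx] at hu
    have hHx : H x = ∫ t in Set.Ioc 0 x, g t := by
      simp only [hH_def]
      exact intervalIntegral.integral_of_le hx
    rw [hHx, hm_def]
    linarith [hu]
  have hg_tail_zero : ∀ x, B ≤ x → (∫ t in Set.Ioi x, g t) = 0 := by
    intro x hx
    have hae : ∀ᵐ t ∂(volume.restrict (Set.Ioi x)), g t = 0 := by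
      rw [ae_restrict_iff' measurableSet_Ioi]
      filter_upwards [hBf] with t ht htm
      have hBt : B < t := lt_of_le_of_lt hx (Set.mem_Ioi.mp htm)
      simp [hg_def, ht hBt]
    exact integral_eq_zero_of_ae hae
  have hHB : H B = m := by
    have h1 := hH_split B hBpos.le
    rw [hg_tail_zero B le_rfl] at h1
    linarith
  have hH_le_m : ∀ x, H x ≤ m := by
    intro x
    rcases le_or_gt x B with hx | hx
    · rw [← hHB]; exact hH_mono hx
    · have h1 := hH_split x (hBpos.le.trans hx.le)
      have h2 := hg_tail_zero x hx.le
      linarith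
  have hrho_eq : ∀ lam x, rhoLe f lam x = lam * H x := by
    intro lam x
    simp only [rhoLe, hH_def, hg_def]
  -- choose x₀ with H x₀ = m/2
  have hmem : m / 2 ∈ Set.Icc (H 0) (H B) := by
    rw [hH0, hHB]; constructor <;> linarith
  obtain ⟨x₀, hx₀mem, hHx₀⟩ := intermediate_value_Icc hBpos.le hH_cont.continuousOn hmem
  have hx₀pos : 0 < x₀ := by
    rcases hx₀mem.1.lt_or_eq with h | h
    · exact h
    · exfalso; rw [← h, hH0] at hHx₀; linarith
  set c₀ : ℝ := ∫ t in (0:ℝ)..x₀, t ^ 2 * f t with hc₀_def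
  have hq_primitive_mono : ∀ x y : ℝ, x ≤ y →
      (∫ t in (0:ℝ)..x, t ^ 2 * f t) ≤ ∫ t in (0:ℝ)..y, t ^ 2 * f t := by
    intro x y hxy
    have hadd := intervalIntegral.integral_add_adjacent_intervals
      (hq_int.intervalIntegrable (a := 0) (b := x)) (hq_int.intervalIntegrable (a := x) (b := y))
    have hnn : 0 ≤ ∫ t in x..y, t ^ 2 * f t :=
      intervalIntegral.integral_nonneg hxy fun t _ => hq_nonneg t
    linarith [hadd]
  have hc₀_pos : 0 < c₀ := by
    have htends : Tendsto H (nhds 0) (nhds 0) := by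
      have h := hH_cont.tendsto 0
      rwa [hH0] at h
    have h4 : ∀ᶠ ε in nhds (0:ℝ), H ε < m / 4 :=
      htends.eventually_lt_const (by linarith)
    have h5 : ∀ᶠ ε in nhds (0:ℝ), ε < x₀ := eventually_lt_nhds hx₀pos
    have h6 : ∀ᶠ ε in nhdsWithin (0:ℝ) (Set.Ioi 0), (H ε < m / 4 ∧ ε < x₀) ∧ 0 < ε :=
      ((h4.and h5).filter_mono nhdsWithin_le_nhds).and eventually_mem_nhdsWithin
    obtain ⟨ε, ⟨hε1, hε2⟩, hε3⟩ := h6.exists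
    have hadd := intervalIntegral.integral_add_adjacent_intervals
      (hg_int.intervalIntegrable (a := 0) (b := ε)) (hg_int.intervalIntegrable (a := ε) (b := x₀))
    have hIoc : (∫ t in Set.Ioc ε x₀, g t) = H x₀ - H ε := by
      rw [← intervalIntegral.integral_of_le hε2.le]
      simp only [hH_def]
      linarith [hadd]
    have hIocq : (∫ t in Set.Ioc ε x₀, ε * g t) ≤ ∫ t in Set.Ioc ε x₀, t ^ 2 * f t := by
      refine setIntegral_mono_on ((hg_int.integrableOn).const_mul ε)
        (hq_int.integrableOn) measurableSet_Ioc ?_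
      intro t ht
      have heq : t ^ 2 * f t = t * g t := by rw [hg_def]; ring
      rw [heq]
      exact mul_le_mul_of_nonneg_right ht.1.le (hg_nonneg t)
    have hsub : (∫ t in Set.Ioc ε x₀, t ^ 2 * f t) ≤ ∫ t in Set.Ioc 0 x₀, t ^ 2 * f t := by
      refine setIntegral_mono_set (hq_int.integrableOn)
        (Eventually.of_forall fun t => hq_nonneg t)
        (HasSubset.Subset.eventuallyLE (Set.Ioc_subset_Ioc_left hε3.le))
    have hconst : (∫ t in Set.Ioc ε x₀, ε * g t) = ε * (H x₀ - H ε) := by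
      rw [integral_const_mul, hIoc]
    have hc₀eq : c₀ = ∫ t in Set.Ioc 0 x₀, t ^ 2 * f t := by
      rw [hc₀_def]
      exact intervalIntegral.integral_of_le hx₀pos.le
    have hfin : ε * (m / 4) ≤ c₀ := by
      have h1 : ε * (m / 4) ≤ ε * (H x₀ - H ε) := by
        apply mul_le_mul_of_nonneg_left _ hε3.le
        rw [hHx₀]; linarith
      rw [hc₀eq]
      calc ε * (m/4) ≤ ε * (H x₀ - H ε) := h1
        _ = ∫ t in Set.Ioc ε x₀, ε * g t := hconst.symm
        _ ≤ ∫ t in Set.Ioc ε x₀, t ^ 2 * f t := hIocq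
        _ ≤ _ := hsub
    nlinarith
  ----------------------------------------------------------------
  set L := nhdsWithin (1/m) (Set.Iio (1/m)) with hL_def
  have hlam_tendsto : Tendsto (fun lam : ℝ => lam * m) L (nhds 1) := by
    have h1 : Tendsto (fun lam : ℝ => lam) L (nhds (1/m)) :=
      tendsto_id.mono_left nhdsWithin_le_nhds
    have h2 := h1.mul_const m
    rwa [one_div, inv_mul_cancel₀ hm_pos.ne'] at h2
  have hev1 : ∀ᶠ lam in L, 2/3 < lam * m := hlam_tendsto.eventually_const_lt (by norm_num)
  have hev2 : ∀ᶠ lam in L, lam * m < 1 := by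
    filter_upwards [eventually_mem_nhdsWithin] with lam hlam
    have h1 : lam < 1/m := hlam
    calc lam * m < (1/m) * m := mul_lt_mul_of_pos_right h1 hm_pos
      _ = 1 := by field_simp
  have hbound : ∀ᶠ lam in L,
      0 ≤ Real.log (1 / (1 - lam * m)) / TsrptMean f lam ∧
      Real.log (1 / (1 - lam * m)) / TsrptMean f lam ≤
        (8 * B / c₀) * ((1 - lam * m) * Real.log (1 / (1 - lam * m))) := by
    filter_upwards [hev1, hev2] with lam hρlo hρhi
    have hu_pos : 0 < 1 - lam * m := by linarith
    have hu_lt : 1 - lam * m < 1/3 := by linarith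
    have hlam_pos : 0 < lam := by nlinarith
    have hlog_nonneg : 0 ≤ Real.log (1 / (1 - lam * m)) := by
      apply Real.log_nonneg
      rw [le_one_div (by norm_num) hu_pos]
      linarith
    -- choose xl with H xl = m - (1-ρ)/lam
    have hmem2 : m - (1 - lam * m) / lam ∈ Set.Icc (H 0) (H B) := by
      rw [hH0, hHB]
      constructor
      · rw [sub_nonneg, div_le_iff₀ hlam_pos]
        nlinarith
      · have h1 : 0 ≤ (1 - lam * m) / lam := div_nonneg hu_pos.le hlam_pos.le
        linarith
    obtain ⟨xl, hxlmem, hHxl⟩ := intermediate_value_Icc hBpos.le hH_cont.continuousOn hmem2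
    have hx₀xl : x₀ < xl := by
      by_contra h
      push_neg at h
      have h1 : H xl ≤ H x₀ := hH_mono h
      rw [hHxl, hHx₀] at h1
      have h2 : m / 2 ≤ (1 - lam * m) / lam := by linarith
      rw [le_div_iff₀ hlam_pos] at h2
      nlinarith
    have hxl_pos : 0 < xl := hx₀pos.trans hx₀xl
    have hden_pos : ∀ x, 0 < 1 - rhoLe f lam x := by
      intro x
      have h1 : rhoLe f lam x ≤ lam * m := by
        rw [hrho_eq]
        exact mul_le_mul_of_nonneg_left (hH_le_m x) hlam_pos.le
      linarith
    have hT1_nonneg : ∀ x, 0 < x → 0 ≤ Tsrpt1 f lam x := by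
      intro x hx
      unfold Tsrpt1
      have h1 : 0 ≤ ∫ t in (0:ℝ)..x, t ^ 2 * f t :=
        intervalIntegral.integral_nonneg hx.le fun t _ => hq_nonneg t
      have h2 : 0 ≤ tailS f x := setIntegral_nonneg measurableSet_Ioi fun t _ => hf_nonneg t
      have hd := hden_pos x
      have hterm1 : 0 ≤ (lam * (∫ t in (0:ℝ)..x, t ^ 2 * f t) + lam * x ^ 2 * tailS f x)
          / (2 * (1 - rhoLe f lam x) ^ 2) := by
        apply div_nonneg
        · have h3 := sq_nonneg x
          positivity
        · positivity
      have hterm2 : 0 ≤ ∫ t in (0:ℝ)..x, 1 / (1 - rhoLe f lam t) := by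
        apply intervalIntegral.integral_nonneg hx.le
        intro t _
        have := hden_pos t
        positivity
      linarith
    have hrho_xl : rhoLe f lam xl = lam * m - (1 - lam * m) := by
      rw [hrho_eq, hHxl]
      field_simp
    have hkey : ∀ x, xl < x →
        lam * c₀ / (8 * (1 - lam * m) ^ 2) * f x ≤ Tsrpt1 f lam x * f x := by
      intro x hx
      have hxpos : 0 < x := hxl_pos.trans hx
      refine mul_le_mul_of_nonneg_right ?_ (hf_nonneg x)
      have hd_pos := hden_pos x
      have hd_le : 1 - rhoLe f lam x ≤ 2 * (1 - lam * m) := by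
        have hmono : rhoLe f lam xl ≤ rhoLe f lam x := by
          rw [hrho_eq, hrho_eq]
          exact mul_le_mul_of_nonneg_left (hH_mono hx.le) hlam_pos.le
        rw [hrho_xl] at hmono
        linarith
      have h2 : 0 ≤ tailS f x := setIntegral_nonneg measurableSet_Ioi fun t _ => hf_nonneg t
      have hnum : lam * c₀ ≤ lam * (∫ t in (0:ℝ)..x, t ^ 2 * f t) + lam * x ^ 2 * tailS f x := by
        have h1 : c₀ ≤ ∫ t in (0:ℝ)..x, t ^ 2 * f t := by
          rw [hc₀_def]
          exact hq_primitive_mono x₀ x (by linarith)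
        have e1 : lam * c₀ ≤ lam * ∫ t in (0:ℝ)..x, t ^ 2 * f t :=
          mul_le_mul_of_nonneg_left h1 hlam_pos.le
        have e2 : 0 ≤ lam * x ^ 2 * tailS f x := by positivity
        linarith
      have hterm2 : 0 ≤ ∫ t in (0:ℝ)..x, 1 / (1 - rhoLe f lam t) := by
        apply intervalIntegral.integral_nonneg hxpos.le
        intro t _
        have := hden_pos t
        positivity
      have hdiv : lam * c₀ / (8 * (1 - lam * m) ^ 2) ≤
          (lam * (∫ t in (0:ℝ)..x, t ^ 2 * f t) + lam * x ^ 2 * tailS f x)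
            / (2 * (1 - rhoLe f lam x) ^ 2) := by
        apply div_le_div₀ (le_trans (by positivity) hnum) hnum
        · positivity
        · have hsq : (1 - rhoLe f lam x) ^ 2 ≤ (2 * (1 - lam * m)) ^ 2 :=
            pow_le_pow_left₀ hd_pos.le hd_le 2
          nlinarith [hsq]
      unfold Tsrpt1
      linarith
    have htail_lb : (1 - lam * m) / (lam * B) ≤ tailS f xl := by
      have hGxl : (∫ t in Set.Ioi xl, g t) = (1 - lam * m) / lam := by
        have h1 := hH_split xl hxl_pos.le
        rw [hHxl] at h1
        linarith
      have hcmp : (∫ t in Set.Ioi xl, g t) ≤ ∫ t in Set.Ioi xl, B * f t := by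
        refine setIntegral_mono_ae_restrict (hg_int.integrableOn)
          ((hf_int.mono_set (Set.Ioi_subset_Ioi hxl_pos.le)).const_mul B) ?_
        rw [EventuallyLE, ae_restrict_iff' measurableSet_Ioi]
        filter_upwards [hBf] with t ht _
        rcases le_or_gt t B with h | h
        · exact mul_le_mul_of_nonneg_right h (hf_nonneg t)
        · simp [hg_def, ht h]
      rw [hGxl, integral_const_mul] at hcmp
      have htS : tailS f xl = ∫ t in Set.Ioi xl, f t := rfl
      rw [div_le_iff₀ (mul_pos hlam_pos hBpos), htS]
      rw [div_le_iff₀ hlam_pos] at hcmp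
      linarith [hcmp]
    -- lower bound for TsrptMean
    have hTlb : TsrptMean f lam = 0 ∨ c₀ / (8 * B * (1 - lam * m)) ≤ TsrptMean f lam := by
      by_cases hInt : IntegrableOn (fun x => Tsrpt1 f lam x * f x) (Set.Ioi 0)
      · right
        have hsub : Set.Ioi xl ⊆ Set.Ioi (0:ℝ) := Set.Ioi_subset_Ioi hxl_pos.le
        have hI1 : (∫ x in Set.Ioi xl, Tsrpt1 f lam x * f x) ≤ TsrptMean f lam := by
          unfold TsrptMean
          refine setIntegral_mono_set hInt ?_ (HasSubset.Subset.eventuallyLE hsub)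
          rw [EventuallyLE, ae_restrict_iff' measurableSet_Ioi]
          exact ae_of_all _ fun x hx =>
            mul_nonneg (hT1_nonneg x (Set.mem_Ioi.mp hx)) (hf_nonneg x)
        have hI2 : lam * c₀ / (8 * (1 - lam * m) ^ 2) * tailS f xl ≤
            ∫ x in Set.Ioi xl, Tsrpt1 f lam x * f x := by
          have h := setIntegral_mono_on
            (((hf_int.mono_set hsub)).const_mul (lam * c₀ / (8 * (1 - lam * m) ^ 2)))
            (hInt.mono_set hsub) measurableSet_Ioi
            (fun x hx => hkey x (Set.mem_Ioi.mp hx))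
          rw [integral_const_mul] at h
          exact h
        have hfinal : c₀ / (8 * B * (1 - lam * m)) ≤
            lam * c₀ / (8 * (1 - lam * m) ^ 2) * tailS f xl := by
          have hcoef : (0:ℝ) ≤ lam * c₀ / (8 * (1 - lam * m) ^ 2) := by positivity
          have h1 := mul_le_mul_of_nonneg_left htail_lb hcoef
          have hne1 : (0:ℝ) < 8 * (1 - lam * m) ^ 2 * (lam * B) := by positivity
          have hne2 : (0:ℝ) < 8 * B * (1 - lam * m) := by positivity
          have heq : lam * c₀ / (8 * (1 - lam * m) ^ 2) * ((1 - lam * m) / (lam * B)) =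
              c₀ / (8 * B * (1 - lam * m)) := by
            rw [div_mul_div_comm, div_eq_div_iff hne1.ne' hne2.ne']
            ring
          linarith [h1, heq]
        linarith
      · left
        unfold TsrptMean
        exact integral_undef hInt
    rcases hTlb with h0 | hT
    · rw [h0, div_zero]
      refine ⟨le_refl 0, ?_⟩
      have h1 : 0 ≤ (1 - lam * m) * Real.log (1 / (1 - lam * m)) :=
        mul_nonneg hu_pos.le hlog_nonneg
      positivity
    · have hT_pos : 0 < TsrptMean f lam :=
        lt_of_lt_of_le (by positivity) hT
      refine ⟨div_nonneg hlog_nonneg hT_pos.le, ?_⟩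
      have hstep : Real.log (1 / (1 - lam * m)) / TsrptMean f lam ≤
          Real.log (1 / (1 - lam * m)) / (c₀ / (8 * B * (1 - lam * m))) :=
        div_le_div_of_nonneg_left hlog_nonneg (by positivity) hT
      have heq : Real.log (1 / (1 - lam * m)) / (c₀ / (8 * B * (1 - lam * m))) =
          (8 * B / c₀) * ((1 - lam * m) * Real.log (1 / (1 - lam * m))) := by
        rw [div_div_eq_mul_div]
        ring
      linarith [hstep, heq]
  -- final squeeze
  have hg_tendsto : Tendsto
      (fun lam => (8 * B / c₀) * ((1 - lam * m) * Real.log (1 / (1 - lam * m))))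
      L (nhds 0) := by
    have hu : Tendsto (fun lam : ℝ => 1 - lam * m) L (nhdsWithin 0 (Set.Ioi 0)) := by
      apply tendsto_nhdsWithin_iff.mpr
      constructor
      · have h := hlam_tendsto.const_sub 1
        simpa using h
      · filter_upwards [hev2] with lam h
        simp only [Set.mem_Ioi]
        linarith
    have hxlog : Tendsto (fun x : ℝ => x * Real.log (1/x))
        (nhdsWithin 0 (Set.Ioi 0)) (nhds 0) := by
      have h := (tendsto_log_mul_rpow_nhdsGT_zero one_pos).neg
      rw [neg_zero] at h
      refine h.congr' (Eventually.of_forall fun x => ?_)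
      simp only [Real.rpow_one, one_div, Real.log_inv]
      ring
    have h := (hxlog.comp hu).const_mul (8 * B / c₀)
    simpa [Function.comp] using h
  exact squeeze_zero' (hbound.mono fun lam h => h.1) (hbound.mono fun lam h => h.2) hg_tendsto
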